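/- One-step recursion bound for the safe sets: for every time i > t₀, Ŝ_{i−1} ∩ G_{i−1}^{i+1}(l, Ŝ_{i−1}) ⊆ Ŝ_i; in particular |Ŝ_i| ≥ |Ŝ_{i−1} ∩ G_{i−1}^{i+1}(l, Ŝ_{i−1})|. -/

import Mathlib

/-- Combined Lipschitz bound `L(s, s', τ, τ') = L_s·d_s(s,s') + L_t·|τ − τ'|·Δ`. -/
def Lfun {S : Type*} (ds : S → S → ℝ) (Ls Lt Δ : ℝ) (s s' : S) (τ τ' : ℕ) : ℝ :=
  Ls * ds s s' + Lt * |(τ : ℝ) - (τ' : ℝ)| * Δ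

/-- One-step safe set `S_t(l, X)` (for `t ≥ 1`). -/
def oneStepSafe {S : Type*} (ds : S → S → ℝ) (Ls Lt Δ h : ℝ) (l : ℕ → S → ℝ)
    (X : Set S) (t : ℕ) : Set S :=
  {s | ∃ s' ∈ X, l (t - 1) s' - Lfun ds Ls Lt Δ s s' t (t - 1) ≥ h}

/-- Conservative safe set `G_{τ'}^{τ}(l, X)` (for `τ' < τ`). -/
def consSafe {S : Type*} (ds : S → S → ℝ) (Ls Lt Δ h : ℝ) (l : ℕ → S → ℝ)
    (X : Set S) (τ' τ : ℕ) : Set S :=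
  {s | ∃ s' ∈ X, l τ' s' - Lfun ds Ls Lt Δ s s' τ τ' ≥ h}
/-- One-step reachable set: `X` together with the states reachable from `X` in one step. -/
def Rreach {S A : Type*} (f : S → A → S) (X : Set S) : Set S :=
  X ∪ {s | ∃ s' ∈ X, ∃ a : A, s = f s' a}

/-- One-step returnable set: `X` together with the states from which `X` can be
reached in one step. -/
def Rret {S A : Type*} (f : S → A → S) (X : Set S) : Set S :=
  X ∪ {s | ∃ a : A, f s a ∈ X}

/-- The recursively defined safe sets: `hatS … i = Ŝ_i`, with `Ŝ_{t₀} = X₀` and, for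
`i > t₀`, `Ŝ_i = S_i(l, Ŝ_{i−1}) ∩ R_reach(Ŝ_{i−1}) ∩ R_ret(G_{i−1}^{i+1}(l, Ŝ_{i−1}))`. -/
def hatS {S A : Type*} (f : S → A → S) (ds : S → S → ℝ) (Ls Lt Δ h : ℝ)
    (l : ℕ → S → ℝ) (t₀ : ℕ) (X₀ : Set S) : ℕ → Set S := fun i =>
  Nat.rec X₀
    (fun n prev =>
      oneStepSafe ds Ls Lt Δ h l prev (t₀ + n + 1) ∩ Rreach f prev ∩
        Rret f (consSafe ds Ls Lt Δ h l prev (t₀ + n) (t₀ + n + 2)))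
    (i - t₀)

theorem hatS_one_step_recursion_bound {S A : Type*} [Fintype S] [Fintype A]
    (f : S → A → S)
    (ds : S → S → ℝ) (hds_nonneg : ∀ s s' : S, 0 ≤ ds s s')
    (hds_refl : ∀ s : S, ds s s = 0)
    (Ls Lt Δ : ℝ) (hLs : 0 ≤ Ls) (hLt : 0 ≤ Lt) (hΔ : 0 ≤ Δ) (h : ℝ)
    (l : ℕ → S → ℝ) (t₀ : ℕ) (ht₀ : 1 ≤ t₀) (X₀ : Set S)
    (i : ℕ) (hi : t₀ < i) :
    hatS f ds Ls Lt Δ h l t₀ X₀ (i - 1) ∩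
        consSafe ds Ls Lt Δ h l (hatS f ds Ls Lt Δ h l t₀ X₀ (i - 1)) (i - 1) (i + 1) ⊆
      hatS f ds Ls Lt Δ h l t₀ X₀ i ∧
    (hatS f ds Ls Lt Δ h l t₀ X₀ (i - 1) ∩
        consSafe ds Ls Lt Δ h l (hatS f ds Ls Lt Δ h l t₀ X₀ (i - 1)) (i - 1) (i + 1)).ncard ≤
      (hatS f ds Ls Lt Δ h l t₀ X₀ i).ncard := by
  obtain ⟨n, rfl⟩ : ∃ n, i = t₀ + n + 1 := ⟨i - t₀ - 1, by omega⟩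
  have hpred : t₀ + n + 1 - 1 = t₀ + n := rfl
  rw [hpred]
  have hrec : hatS f ds Ls Lt Δ h l t₀ X₀ (t₀ + n + 1) =
      oneStepSafe ds Ls Lt Δ h l (hatS f ds Ls Lt Δ h l t₀ X₀ (t₀ + n)) (t₀ + n + 1) ∩
        Rreach f (hatS f ds Ls Lt Δ h l t₀ X₀ (t₀ + n)) ∩
        Rret f (consSafe ds Ls Lt Δ h l (hatS f ds Ls Lt Δ h l t₀ X₀ (t₀ + n)) (t₀ + n)
          (t₀ + n + 2)) := by
    unfold hatS
    have h1 : t₀ + n + 1 - t₀ = n + 1 := by omega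
    have h2 : t₀ + n - t₀ = n := by omega
    rw [h1, h2]
  set P := hatS f ds Ls Lt Δ h l t₀ X₀ (t₀ + n) with hP
  have hsub : P ∩ consSafe ds Ls Lt Δ h l P (t₀ + n) (t₀ + n + 1 + 1) ⊆
      hatS f ds Ls Lt Δ h l t₀ X₀ (t₀ + n + 1) := by
    rintro s ⟨hsprev, s', hs', hge⟩
    rw [hrec]
    have harith : t₀ + n + 1 + 1 = t₀ + n + 2 := by omega
    rw [harith] at hge
    refine ⟨⟨⟨s', hs', ?_⟩, Or.inl hsprev⟩, Or.inl ⟨s', hs', by rw [harith]; exact hge⟩⟩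
    have hL : Lfun ds Ls Lt Δ s s' (t₀ + n + 1) (t₀ + n + 1 - 1) ≤
        Lfun ds Ls Lt Δ s s' (t₀ + n + 2) (t₀ + n) := by
      unfold Lfun
      rw [hpred]
      have habs : |((t₀ + n + 1 : ℕ) : ℝ) - ((t₀ + n : ℕ) : ℝ)| ≤
          |((t₀ + n + 2 : ℕ) : ℝ) - ((t₀ + n : ℕ) : ℝ)| := by
        push_cast
        rw [show ((t₀:ℝ) + n + 1) - ((t₀:ℝ) + n) = 1 by ring,
          show ((t₀:ℝ) + n + 2) - ((t₀:ℝ) + n) = 2 by ring, abs_one,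
          show |(2:ℝ)| = 2 from abs_of_nonneg (by norm_num)]
        norm_num
      exact add_le_add_right
        (mul_le_mul_of_nonneg_right (mul_le_mul_of_nonneg_left habs hLt) hΔ) _
    rw [hpred] at hL ⊢
    simp only [ge_iff_le] at hge ⊢
    linarith
  exact ⟨hsub, Set.ncard_le_ncard hsub (Set.toFinite _)⟩
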